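/- Define h* = −(2^{N−1}·γ_SD/(θ·γ_UD))·ln λ − 1/γ_UD. Let (h_d, h_b) ∈ [0,∞)² with h_b < θ/γ_UB. If h_d < h*, then G_N(h_d,h_b) > G_i(h_d,h_b) for every i ∈ {0,1,…,N−1}; if h_d > h*, then G_0(h_d,h_b) > G_i(h_d,h_b) for every i ∈ {1,…,N}. That is, in the region h_b < θ/γ_UB the maximum-reward power level is N when h_d < h* and 0 when h_d > h*. -/

import Mathlib

open Real

/-- Decoding probability `p_i(h_d)` (for `i ≥ 1`). -/
noncomputable def pLvl (θ γSD γUD : ℝ) (i : ℕ) (hd : ℝ) : ℝ :=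
  Real.exp (-(θ * (γUD * hd + 1)) / (2 ^ (i - 1) * γSD))

/-- Blockage probability `q_i(h_b)` (for `i ≥ 1`). -/
noncomputable def qLvl (θ γSB γUB : ℝ) (i : ℕ) (hb : ℝ) : ℝ :=
  min (Real.exp (-(γUB * hb - θ) / (θ * 2 ^ (i - 1) * γSB))) 1

/-- Gain `G_i(h_d, h_b) = p_i(h_d) − λ·q_i(h_b)`, with `G_0 = 0`. -/
noncomputable def gain (θ lam γSD γSB γUD γUB : ℝ) (i : ℕ) (hd hb : ℝ) : ℝ :=
  if i = 0 then 0 else pLvl θ γSD γUD i hd - lam * qLvl θ γSB γUB i hb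

/-- In the region `h_b < θ/γ_UB`, with
`h* = −(2^{N−1}·γ_SD/(θ·γ_UD))·ln λ − 1/γ_UD`, the maximum-reward power level is `N`
when `h_d < h*` and `0` when `h_d > h*`. -/
theorem stmt2 (N : ℕ) (hN : 1 ≤ N) (θ lam γSD γSB γUD γUB : ℝ)
    (hθ : 0 < θ) (hlam : 0 < lam) (hγSD : 0 < γSD) (hγSB : 0 < γSB)
    (hγUD : 0 < γUD) (hγUB : 0 < γUB)
    (hstar : ℝ)
    (hhstar : hstar = -(2 ^ (N - 1) * γSD / (θ * γUD)) * Real.log lam - 1 / γUD) :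
    ∀ h_d h_b : ℝ, 0 ≤ h_d → 0 ≤ h_b → h_b < θ / γUB →
      (h_d < hstar → ∀ i : ℕ, i ≤ N - 1 →
        gain θ lam γSD γSB γUD γUB N h_d h_b > gain θ lam γSD γSB γUD γUB i h_d h_b) ∧
      (h_d > hstar → ∀ i : ℕ, 1 ≤ i → i ≤ N →
        gain θ lam γSD γSB γUD γUB 0 h_d h_b > gain θ lam γSD γSB γUD γUB i h_d h_b) := by
  intro h_d h_b hhd hhb hblt
  have hP : (0:ℝ) < 2 ^ (N - 1) := by positivity
  set P : ℝ := 2 ^ (N - 1) with hPdef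
  have hc : 0 < θ * (γUD * h_d + 1) := by nlinarith [mul_nonneg hγUD.le hhd]
  set c : ℝ := θ * (γUD * h_d + 1) with hcdef
  set L : ℝ := Real.log lam with hLdef
  -- q_i = 1 in this region
  have hq : ∀ i : ℕ, qLvl θ γSB γUB i h_b = 1 := by
    intro i
    have h1 : h_b * γUB < θ := (lt_div_iff₀ hγUB).mp hblt
    have hpos : (0:ℝ) ≤ -(γUB * h_b - θ) / (θ * 2 ^ (i - 1) * γSB) := by
      apply div_nonneg
      · nlinarith
      · positivity
    have hex : (1:ℝ) ≤ Real.exp (-(γUB * h_b - θ) / (θ * 2 ^ (i - 1) * γSB)) := by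
      rw [← Real.exp_zero]; exact Real.exp_le_exp.mpr hpos
    unfold qLvl
    exact min_eq_right hex
  -- gain for i ≥ 1
  have hgain : ∀ i : ℕ, 1 ≤ i →
      gain θ lam γSD γSB γUD γUB i h_d h_b
        = Real.exp (-c / (2 ^ (i - 1) * γSD)) - lam := by
    intro i hi
    unfold gain pLvl
    rw [if_neg (by omega), hq i, mul_one, hcdef]
  have hgN : gain θ lam γSD γSB γUD γUB N h_d h_b
      = Real.exp (-c / (P * γSD)) - lam := hgain N hN
  -- p monotone (non-strict) in i up to N
  have hple : ∀ i : ℕ, i ≤ N →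
      Real.exp (-c / (2 ^ (i - 1) * γSD)) ≤ Real.exp (-c / (P * γSD)) := by
    intro i h2
    apply Real.exp_le_exp.mpr
    have hle : (2:ℝ) ^ (i - 1) ≤ P := by
      apply pow_le_pow_right₀ (by norm_num) (by omega)
    rw [neg_div, neg_div, neg_le_neg_iff]
    gcongr
    all_goals first | exact hc.le | positivity
  -- key equivalence with hstar
  have hid : θ * γUD * hstar = -(P * γSD * L) - θ := by
    rw [hhstar]; field_simp
  constructor
  · intro hlt i hile
    have hkey : lam < Real.exp (-c / (P * γSD)) := by
      rw [← Real.exp_log hlam, ← hLdef, Real.exp_lt_exp]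
      rw [lt_div_iff₀ (by positivity : (0:ℝ) < P * γSD)]
      have h3 : θ * γUD * h_d < θ * γUD * hstar :=
        mul_lt_mul_of_pos_left hlt (by positivity)
      nlinarith
    rcases Nat.eq_zero_or_pos i with hi0 | hi1
    · subst hi0
      rw [hgN]
      unfold gain
      rw [if_pos rfl]
      linarith
    · rw [hgN, hgain i hi1]
      have hlt2 : Real.exp (-c / (2 ^ (i - 1) * γSD)) < Real.exp (-c / (P * γSD)) := by
        apply Real.exp_lt_exp.mpr
        have hlt3 : (2:ℝ) ^ (i - 1) < P := by
          apply pow_lt_pow_right₀ (by norm_num) (by omega)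
        rw [neg_div, neg_div, neg_lt_neg_iff]
        gcongr
        all_goals positivity
      linarith
  · intro hgt i hi1 hiN
    have hkey : Real.exp (-c / (P * γSD)) < lam := by
      rw [← Real.exp_log hlam, ← hLdef, Real.exp_lt_exp]
      rw [div_lt_iff₀ (by positivity : (0:ℝ) < P * γSD)]
      have h3 : θ * γUD * hstar < θ * γUD * h_d :=
        mul_lt_mul_of_pos_left hgt (by positivity)
      nlinarith
    rw [hgain i hi1]
    unfold gain
    rw [if_pos rfl]
    have := hple i hiN
    linarith
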